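/- Let K be a valued field with valuation v and suppose F(X,Y) = X^2 + (XY - 1)^2 over the real Laurent series field ℝ((t)) with the t-adic valuation. Then F has no zero in ℝ((t))^2, and the set {v(F(a,b)) : a, b ∈ ℝ((t))} has no maximal element (indeed v(F(t^n, t^{-n})) = 2n for all n). -/

import Mathlib

open HahnSeries

lemma sq_leadCoeff (x : LaurentSeries ℝ) (hx : x ≠ 0) :
    (x ^ 2).leadingCoeff = x.leadingCoeff ^ 2 := by
  rw [sq, leadingCoeff_mul, sq]

lemma no_zero (a b : LaurentSeries ℝ) : a ^ 2 + (a * b - 1) ^ 2 ≠ 0 := by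
  intro h
  by_cases ha : a = 0
  · simp [ha] at h
  by_cases hc : a * b - 1 = 0
  · rw [hc] at h
    simp only [ne_eq, OfNat.ofNat_ne_zero, not_false_eq_true, zero_pow, add_zero,
      pow_eq_zero_iff] at h
    exact ha h
  have h2 : a ^ 2 = -((a * b - 1) ^ 2) := by linear_combination h
  have h3 : (a ^ 2).leadingCoeff = (-((a * b - 1) ^ 2)).leadingCoeff := by rw [h2]
  rw [sq_leadCoeff a ha] at h3
  have h4 : (-((a * b - 1) ^ 2)).leadingCoeff = -((a * b - 1).leadingCoeff ^ 2) := by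
    rw [← sq_leadCoeff _ hc]
    simp [leadingCoeff_eq, order_neg]
  rw [h4] at h3
  have p1 : a.leadingCoeff ≠ 0 := leadingCoeff_ne_zero.mpr ha
  have p2 : (a * b - 1).leadingCoeff ≠ 0 := leadingCoeff_ne_zero.mpr hc
  nlinarith [sq_pos_of_ne_zero p1, sq_pos_of_ne_zero p2]

lemma val_tn (n : ℕ) :
    addVal ℤ ℝ ((HahnSeries.single (1 : ℤ) (1 : ℝ) ^ n) ^ 2 +
        (HahnSeries.single (1 : ℤ) (1 : ℝ) ^ n *
          (HahnSeries.single (1 : ℤ) (1 : ℝ) ^ n)⁻¹ - 1) ^ 2)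
      = ((2 * n : ℤ) : WithTop ℤ) := by
  have hs : (HahnSeries.single (1 : ℤ) (1 : ℝ)) ^ n = HahnSeries.single (n : ℤ) (1 : ℝ) := by
    rw [single_pow]; simp
  have hne : (HahnSeries.single (1 : ℤ) (1 : ℝ)) ^ n ≠ 0 := by
    rw [hs]; exact single_ne_zero one_ne_zero
  rw [mul_inv_cancel₀ hne, sub_self]
  have : ((HahnSeries.single (1 : ℤ) (1 : ℝ)) ^ n) ^ 2
      = HahnSeries.single ((2 * n : ℤ)) (1 : ℝ) := by
    rw [hs, sq, single_mul_single]; ring_nf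
  rw [this]
  simp only [ne_eq, OfNat.ofNat_ne_zero, not_false_eq_true, zero_pow, add_zero]
  rw [addVal_apply, orderTop_single one_ne_zero]

theorem ershov_flaw :
    (∀ a b : LaurentSeries ℝ, a ^ 2 + (a * b - 1) ^ 2 ≠ 0) ∧
    (∀ a b : LaurentSeries ℝ, ∃ c d : LaurentSeries ℝ,
      addVal ℤ ℝ (a ^ 2 + (a * b - 1) ^ 2) < addVal ℤ ℝ (c ^ 2 + (c * d - 1) ^ 2)) ∧
    (∀ n : ℕ,
      addVal ℤ ℝ ((HahnSeries.single (1 : ℤ) (1 : ℝ) ^ n) ^ 2 +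
          (HahnSeries.single (1 : ℤ) (1 : ℝ) ^ n *
            (HahnSeries.single (1 : ℤ) (1 : ℝ) ^ n)⁻¹ - 1) ^ 2)
        = ((2 * n : ℤ) : WithTop ℤ)) := by
  refine ⟨no_zero, ?_, val_tn⟩
  intro a b
  set x := a ^ 2 + (a * b - 1) ^ 2 with hx
  have hx0 : x ≠ 0 := no_zero a b
  set n : ℕ := x.order.toNat + 1 with hn
  refine ⟨HahnSeries.single (1 : ℤ) (1 : ℝ) ^ n,
    (HahnSeries.single (1 : ℤ) (1 : ℝ) ^ n)⁻¹, ?_⟩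
  rw [val_tn n, addVal_apply_of_ne hx0]
  have : x.order < (2 * n : ℤ) := by
    have := Int.self_le_toNat x.order
    push_cast [hn]
    omega
  exact_mod_cast WithTop.coe_lt_coe.mpr this
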